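/- Adaptive stopping preserves FDR: suppose a testing procedure over stages 1,...,t_max with random weights A_i satisfies FDR(t_max) ≤ α whenever the weights satisfy the required measurability (A_i determined by the first τ_i p-values) and ∑A_i ≤ 1. If T is a stopping time and we set A_t = 0 for all t > T (which preserves both conditions), then the rejection set at stage t_max equals the rejection set at stage T (no rejections occur after T among stages with zero weight whose p-values thus never satisfy P_i ≤ αβ(r)·0 for P_i > 0), and hence E[FDP(T)] ≤ α. -/

import Mathlib

open Finset Classical

/-- The set of "active" hypothesis indices at stage `t` (indices `i ≤ t`
whose deadline `d i` has not yet passed). -/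
noncomputable def toadC (d : ℕ → ℕ) (t : ℕ) : Finset ℕ :=
  (Finset.Icc 1 t).filter (fun i => t ≤ d i)

/-- The TOAD rejection set at each stage: save old rejections
`Rold = R_{t-1} \ C_t`, take the step-up index
`s = max{j ≤ |C_t| : j ≤ #{i ∈ C_t : P_i ≤ α·β(j+|Rold|)·A_i}}`, and reject
`Rold ∪ {i ∈ C_t : P_i ≤ α·β(s+|Rold|)·A_i}` (the condition
`P_i ≤ thr·A_i` encodes `W_i = P_i/A_i ≤ thr`, with `W_i = ∞` when `A_i = 0`
since p-values are strictly positive). -/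
noncomputable def toadR (d : ℕ → ℕ) (A P : ℕ → ℝ) (α : ℝ) (β : ℕ → ℝ) : ℕ → Finset ℕ
  | 0 => ∅
  | t + 1 =>
    let C := toadC d (t + 1)
    let Rold := toadR d A P α β t \ C
    let s := Nat.findGreatest
      (fun j => j ≤ (C.filter (fun i => P i ≤ α * β (j + Rold.card) * A i)).card) C.card
    Rold ∪ C.filter (fun i => P i ≤ α * β (s + Rold.card) * A i)



theorem toadR_le (d : ℕ → ℕ) (A P : ℕ → ℝ) (α : ℝ) (β : ℕ → ℝ) :
    ∀ t, ∀ i ∈ toadR d A P α β t, i ≤ t := by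
  intro t
  induction t with
  | zero => simp [toadR]
  | succ t ih =>
    intro i hi
    rw [toadR] at hi
    simp only [Finset.mem_union, Finset.mem_sdiff, Finset.mem_filter] at hi
    simp only [Finset.mem_union, Finset.mem_sdiff, Finset.mem_filter, toadC,
      Finset.mem_Icc] at hi
    rcases hi with ⟨h, _⟩ | ⟨⟨⟨_, h⟩, _⟩, _⟩
    · exact (ih i h).trans (Nat.le_succ t)
    · exact h

theorem toadR_stop (d : ℕ → ℕ) (A P : ℕ → ℝ) (α : ℝ) (β : ℕ → ℝ) (t0 : ℕ)
    (hP : ∀ i, 0 < P i) (hA0 : ∀ i, t0 < i → A i = 0)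
    (hdt0 : ∀ i, i ≤ t0 → d i ≤ t0) :
    ∀ n, toadR d A P α β (t0 + n) = toadR d A P α β t0 := by
  intro n
  induction n with
  | zero => rfl
  | succ n ih =>
    have hC : ∀ i ∈ toadC d (t0 + n + 1), t0 < i := by
      intro i hi
      simp only [toadC, Finset.mem_filter, Finset.mem_Icc] at hi
      by_contra h
      have := hdt0 i (Nat.le_of_not_lt h)
      omega
    have hfilt : ∀ j, (toadC d (t0 + n + 1)).filter
        (fun i => P i ≤ α * β j * A i) = ∅ := by
      intro j
      apply Finset.filter_false_of_mem
      intro i hi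
      rw [hA0 i (hC i hi), mul_zero]
      exact not_le.mpr (hP i)
    have hdisj : toadR d A P α β t0 \ toadC d (t0 + n + 1) = toadR d A P α β t0 := by
      apply Finset.sdiff_eq_self_of_disjoint
      rw [Finset.disjoint_left]
      intro i hi hi'
      exact absurd (toadR_le d A P α β t0 i hi) (not_le.mpr (hC i hi'))
    show toadR d A P α β (t0 + n + 1) = _
    rw [toadR]
    simp only [ih, hdisj, hfilt, Finset.union_empty]


open MeasureTheory

/-- Adaptive stopping preserves FDR: run TOAD over stages `1,…,tmax` with the
modified weights `Ã_i = A_i·1(i ≤ T)` for a stopping time `T`. If all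
p-values are strictly positive, the bookkeeping is consistent (deadlines of
tested hypotheses do not extend past `T`), and the procedure with the
modified weights satisfies `FDR(tmax) ≤ α`, then the rejection set at stage
`tmax` equals the rejection set at stage `T` (no rejections occur after `T`
since zero-weight hypotheses never satisfy `P_i ≤ α·β(r)·0` when `P_i > 0`),
and hence `E[FDP(T)] ≤ α`. -/
theorem toad_adaptive_stopping
    {Ω : Type*} [MeasurableSpace Ω] (μ : Measure Ω) [IsProbabilityMeasure μ]
    (tmax : ℕ) (d : ℕ → ℕ) (hd : ∀ i, i ≤ d i)
    (P : ℕ → Ω → ℝ) (hP : ∀ i ω, 0 < P i ω)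
    (A : ℕ → Ω → ℝ) (hA : ∀ i ω, 0 ≤ A i ω)
    (hAsum : ∀ ω, ∑ i ∈ Finset.Icc 1 tmax, A i ω ≤ 1)
    (T : Ω → ℕ) (hT : ∀ ω, T ω ≤ tmax)
    (hdT : ∀ ω, ∀ i, i ≤ T ω → d i ≤ T ω)
    (α : ℝ) (hα : α ∈ Set.Ioo (0 : ℝ) 1)
    (β : ℕ → ℝ) (hβ : Monotone β) (hβ0 : β 0 = 0)
    (Atil : ℕ → Ω → ℝ) (hAtil : ∀ i ω, Atil i ω = if i ≤ T ω then A i ω else 0)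
    (H0 : Finset ℕ)
    (hFDR : ∫ ω,
        ((H0 ∩ toadR d (fun i => Atil i ω) (fun i => P i ω) α β tmax).card : ℝ)
          / (max 1 (toadR d (fun i => Atil i ω) (fun i => P i ω) α β tmax).card : ℝ)
        ∂μ ≤ α) :
    (∀ ω, toadR d (fun i => Atil i ω) (fun i => P i ω) α β tmax
        = toadR d (fun i => Atil i ω) (fun i => P i ω) α β (T ω)) ∧
    ∫ ω,
        ((H0 ∩ toadR d (fun i => Atil i ω) (fun i => P i ω) α β (T ω)).card : ℝ)
          / (max 1 (toadR d (fun i => Atil i ω) (fun i => P i ω) α β (T ω)).card : ℝ)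
        ∂μ ≤ α := by
  have key : ∀ ω, toadR d (fun i => Atil i ω) (fun i => P i ω) α β tmax
      = toadR d (fun i => Atil i ω) (fun i => P i ω) α β (T ω) := by
    intro ω
    have h := toadR_stop d (fun i => Atil i ω) (fun i => P i ω) α β (T ω)
      (fun i => hP i ω)
      (fun i hi => by show Atil i ω = 0; rw [hAtil]; exact if_neg (Nat.not_le.mpr hi))
      (hdT ω) (tmax - T ω)
    rwa [Nat.add_sub_cancel' (hT ω)] at h
  refine ⟨key, ?_⟩
  have : (fun ω =>
      ((H0 ∩ toadR d (fun i => Atil i ω) (fun i => P i ω) α β (T ω)).card : ℝ)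
        / (max 1 (toadR d (fun i => Atil i ω) (fun i => P i ω) α β (T ω)).card : ℝ))
      = fun ω =>
      ((H0 ∩ toadR d (fun i => Atil i ω) (fun i => P i ω) α β tmax).card : ℝ)
        / (max 1 (toadR d (fun i => Atil i ω) (fun i => P i ω) α β tmax).card : ℝ) := by
    funext ω; rw [key ω]
  rw [this]
  exact hFDR
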